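/- arXiv:2306.02461 — 6 statements merged into one kernel-verified Lean document; each statement's English description precedes it below -/
import Mathlib

section
/- Let Y be a real inner product space, let θ ∈ [0,1], and let k_n, k_{n-1} > 0 be two consecutive step sizes with ε_n = (k_n − k_{n-1})/(k_n + k_{n-1}). Then for any three elements y_{n-1}, y_n, y_{n+1} ∈ Y the G-stability identity holds: ⟨α_2 y_{n+1} + α_1 y_n + α_0 y_{n-1}, β_2^{(n)} y_{n+1} + β_1^{(n)} y_n + β_0^{(n)} y_{n-1}⟩_Y = ‖(y_{n+1}, y_n)‖_{G(θ)}^2 − ‖(y_n, y_{n-1})‖_{G(θ)}^2 + ‖γ_2^{(n)} y_{n+1} + γ_1^{(n)} y_n + γ_0^{(n)} y_{n-1}‖_Y^2. -/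
open RealInnerProductSpace

theorem dln_aux
    (Y : Type*) [NormedAddCommGroup Y] [InnerProductSpace ℝ Y]
    (θ ε g : ℝ) (he : (1:ℝ) + ε*θ ≠ 0)
    (hg : g^2 = θ*(1 - θ^2)/(2*(1 + ε*θ)^2)) (y0 y1 y2 : Y) :
    ⟪((θ + 1) / 2) • y2 + (-θ) • y1 + ((θ - 1) / 2) • y0,
      ((1/4) * (1 + (1 - θ^2)/(1 + ε*θ)^2 + ε^2*θ*(1 - θ^2)/(1 + ε*θ)^2 + θ)) • y2 +
      ((1/2) * (1 - (1 - θ^2)/(1 + ε*θ)^2)) • y1 +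
      ((1/4) * (1 + (1 - θ^2)/(1 + ε*θ)^2 - ε^2*θ*(1 - θ^2)/(1 + ε*θ)^2 - θ)) • y0⟫
    = ((1/4)*(1 + θ)*‖y2‖^2 + (1/4)*(1 - θ)*‖y1‖^2)
      - ((1/4)*(1 + θ)*‖y1‖^2 + (1/4)*(1 - θ)*‖y0‖^2)
      + ‖(-((1 - ε)/2) * g) • y2 + g • y1 + (-((1 + ε)/2) * g) • y0‖^2 := by
  have hw : (-((1 - ε)/2) * g) • y2 + g • y1 + (-((1 + ε)/2) * g) • y0
      = g • ((-((1 - ε)/2)) • y2 + y1 + (-((1 + ε)/2)) • y0) := by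
    module
  rw [hw, norm_smul, Real.norm_eq_abs, mul_pow, sq_abs, hg]
  simp only [← real_inner_self_eq_norm_sq]
  simp only [inner_add_left, inner_add_right, real_inner_smul_left, real_inner_smul_right]
  rw [real_inner_comm y1 y2, real_inner_comm y0 y2, real_inner_comm y0 y1]
  have he2 : (1:ℝ) + θ*ε ≠ 0 := by rwa [mul_comm]
  field_simp
  ring

/-- G-stability identity for the variable-step DLN method. -/
theorem dln_g_stability_identity
    (Y : Type*) [NormedAddCommGroup Y] [InnerProductSpace ℝ Y]
    (θ : ℝ) (hθ : θ ∈ Set.Icc (0:ℝ) 1)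
    (kn kn1 : ℝ) (hkn : 0 < kn) (hkn1 : 0 < kn1)
    (y0 y1 y2 : Y) :
    let ε : ℝ := (kn - kn1) / (kn + kn1)
    let α2 : ℝ := (θ + 1) / 2
    let α1 : ℝ := -θ
    let α0 : ℝ := (θ - 1) / 2
    let β2 : ℝ := (1/4) * (1 + (1 - θ^2)/(1 + ε*θ)^2 + ε^2*θ*(1 - θ^2)/(1 + ε*θ)^2 + θ)
    let β1 : ℝ := (1/2) * (1 - (1 - θ^2)/(1 + ε*θ)^2)
    let β0 : ℝ := (1/4) * (1 + (1 - θ^2)/(1 + ε*θ)^2 - ε^2*θ*(1 - θ^2)/(1 + ε*θ)^2 - θ)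
    let γ1 : ℝ := -(Real.sqrt (θ*(1 - θ^2)) / (Real.sqrt 2 * (1 + ε*θ)))
    let γ2 : ℝ := -((1 - ε)/2) * γ1
    let γ0 : ℝ := -((1 + ε)/2) * γ1
    let Gnorm2 : Y → Y → ℝ := fun u v => (1/4)*(1 + θ)*‖u‖^2 + (1/4)*(1 - θ)*‖v‖^2
    ⟪α2 • y2 + α1 • y1 + α0 • y0, β2 • y2 + β1 • y1 + β0 • y0⟫
      = Gnorm2 y2 y1 - Gnorm2 y1 y0 + ‖γ2 • y2 + γ1 • y1 + γ0 • y0‖^2 := by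
  obtain ⟨hθ0, hθ1⟩ := hθ
  intro ε α2 α1 α0 β2 β1 β0 γ1 γ2 γ0 Gnorm2
  have hsum : 0 < kn + kn1 := by linarith
  have hε : -1 < ε ∧ ε < 1 := by
    constructor <;> rw [show ε = (kn - kn1) / (kn + kn1) from rfl]
    · rw [lt_div_iff₀ hsum]; linarith
    · rw [div_lt_one hsum]; linarith
  have he : (0:ℝ) < 1 + ε*θ := by nlinarith [hε.1, hε.2, mul_nonneg (by linarith [hε.1] : (0:ℝ) ≤ 1 + ε) hθ0]
  have hA : (0:ℝ) ≤ θ*(1 - θ^2) := mul_nonneg hθ0 (by nlinarith)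
  have hg : γ1^2 = θ*(1 - θ^2)/(2*(1 + ε*θ)^2) := by
    show (-(Real.sqrt (θ*(1 - θ^2)) / (Real.sqrt 2 * (1 + ε*θ))))^2 = _
    rw [neg_pow, div_pow, mul_pow, Real.sq_sqrt hA, Real.sq_sqrt (by norm_num : (0:ℝ) ≤ 2)]
    ring
  exact dln_aux Y θ ε γ1 he.ne' hg y0 y1 y2
end

section
/- Let Y be a real inner product space and θ ∈ [0,1]. For all u, v ∈ Y one has ((1−θ)/4)(‖u‖_Y² + ‖v‖_Y²) ≤ ‖(u,v)‖_{G(θ)}² ≤ ((1+θ)/4)(‖u‖_Y² + ‖v‖_Y²); in particular ‖(u,v)‖_{G(θ)}² ≥ 0, and consequently for any y_{n-1}, y_n, y_{n+1} ∈ Y, ⟨α_2 y_{n+1} + α_1 y_n + α_0 y_{n-1}, β_2^{(n)} y_{n+1} + β_1^{(n)} y_n + β_0^{(n)} y_{n-1}⟩_Y ≥ ‖(y_{n+1}, y_n)‖_{G(θ)}² − ‖(y_n, y_{n-1})‖_{G(θ)}² (G-stability of the DLN method). -/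
open RealInnerProductSpace

set_option maxHeartbeats 1600000 in
/-- Bounds for the `G(θ)`-norm and G-stability of the DLN method. -/
theorem dln_g_norm_bounds_and_g_stability
    (Y : Type*) [NormedAddCommGroup Y] [InnerProductSpace ℝ Y]
    (θ : ℝ) (hθ : θ ∈ Set.Icc (0:ℝ) 1)
    (kn kn1 : ℝ) (hkn : 0 < kn) (hkn1 : 0 < kn1) :
    let ε : ℝ := (kn - kn1) / (kn + kn1)
    let α2 : ℝ := (θ + 1) / 2
    let α1 : ℝ := -θ
    let α0 : ℝ := (θ - 1) / 2
    let β2 : ℝ := (1/4) * (1 + (1 - θ^2)/(1 + ε*θ)^2 + ε^2*θ*(1 - θ^2)/(1 + ε*θ)^2 + θ)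
    let β1 : ℝ := (1/2) * (1 - (1 - θ^2)/(1 + ε*θ)^2)
    let β0 : ℝ := (1/4) * (1 + (1 - θ^2)/(1 + ε*θ)^2 - ε^2*θ*(1 - θ^2)/(1 + ε*θ)^2 - θ)
    let Gnorm2 : Y → Y → ℝ := fun u v => (1/4)*(1 + θ)*‖u‖^2 + (1/4)*(1 - θ)*‖v‖^2
    (∀ u v : Y,
      (1 - θ)/4 * (‖u‖^2 + ‖v‖^2) ≤ Gnorm2 u v ∧
      Gnorm2 u v ≤ (1 + θ)/4 * (‖u‖^2 + ‖v‖^2) ∧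
      0 ≤ Gnorm2 u v) ∧
    (∀ y0 y1 y2 : Y,
      ⟪α2 • y2 + α1 • y1 + α0 • y0, β2 • y2 + β1 • y1 + β0 • y0⟫
        ≥ Gnorm2 y2 y1 - Gnorm2 y1 y0) := by
  intro ε α2 α1 α0 β2 β1 β0 Gnorm2
  obtain ⟨hθ0, hθ1⟩ := hθ
  have hsum : 0 < kn + kn1 := by linarith
  have h1e : 0 < 1 + ε := by
    have h : 1 + ε = 2 * kn / (kn + kn1) := by
      show 1 + (kn - kn1) / (kn + kn1) = _
      field_simp; ring
    rw [h]; positivity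
  have h1e' : 0 < 1 - ε := by
    have h : 1 - ε = 2 * kn1 / (kn + kn1) := by
      show 1 - (kn - kn1) / (kn + kn1) = _
      field_simp; ring
    rw [h]; positivity
  have hα2 : α2 = (θ + 1) / 2 := rfl
  have hα1 : α1 = -θ := rfl
  have hα0 : α0 = (θ - 1) / 2 := rfl
  have hβ2 : β2 = (1/4) * (1 + (1 - θ^2)/(1 + ε*θ)^2 + ε^2*θ*(1 - θ^2)/(1 + ε*θ)^2 + θ) := rfl
  have hβ1 : β1 = (1/2) * (1 - (1 - θ^2)/(1 + ε*θ)^2) := rfl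
  have hβ0 : β0 = (1/4) * (1 + (1 - θ^2)/(1 + ε*θ)^2 - ε^2*θ*(1 - θ^2)/(1 + ε*θ)^2 - θ) := rfl
  have hG : ∀ u v : Y, Gnorm2 u v = (1/4)*(1 + θ)*‖u‖^2 + (1/4)*(1 - θ)*‖v‖^2 := fun _ _ => rfl
  clear_value ε α2 α1 α0 β2 β1 β0 Gnorm2
  have hd : 0 < 1 + ε * θ := by
    nlinarith [mul_nonneg (by linarith : (0:ℝ) ≤ 1 - ε) hθ0,
      mul_nonneg (by linarith : (0:ℝ) ≤ 1 + ε) hθ0]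
  have hd' : (1 + ε * θ) ≠ 0 := ne_of_gt hd
  have expand : ∀ (a b c a' b' c' : ℝ) (x y z : Y),
      ⟪a • x + b • y + c • z, a' • x + b' • y + c' • z⟫
        = a*a'*‖x‖^2 + b*b'*‖y‖^2 + c*c'*‖z‖^2
          + (a*b' + b*a')*⟪x, y⟫ + (a*c' + c*a')*⟪x, z⟫ + (b*c' + c*b')*⟪y, z⟫ := by
    intro a b c a' b' c' x y z
    simp only [inner_add_left, inner_add_right, real_inner_smul_left,
      real_inner_smul_right, real_inner_self_eq_norm_sq,
      real_inner_comm y x, real_inner_comm z x, real_inner_comm z y]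
    ring
  constructor
  · intro u v
    have hu := sq_nonneg ‖u‖
    have hv := sq_nonneg ‖v‖
    rw [hG]
    refine ⟨by nlinarith, by nlinarith, by nlinarith⟩
  · intro y0 y1 y2
    set v : Y := ((1 - ε)/2) • y2 + (-1 : ℝ) • y1 + ((1 + ε)/2) • y0 with hv
    have hvnn : (0:ℝ) ≤ ⟪v, v⟫ := real_inner_self_nonneg
    have hcoef : (0:ℝ) ≤ θ * (1 - θ^2) / (2 * (1 + ε * θ)^2) := by
      apply div_nonneg
      · nlinarith
      · positivity
    have key : ⟪α2 • y2 + α1 • y1 + α0 • y0, β2 • y2 + β1 • y1 + β0 • y0⟫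
        = Gnorm2 y2 y1 - Gnorm2 y1 y0
          + (θ * (1 - θ^2) / (2 * (1 + ε * θ)^2)) * ⟪v, v⟫ := by
      rw [hv, expand, expand, hG, hG, hα2, hα1, hα0, hβ2, hβ1, hβ0]
      generalize ‖y2‖^2 = A
      generalize ‖y1‖^2 = B
      generalize ‖y0‖^2 = C
      generalize ⟪y2, y1⟫ = P
      generalize ⟪y2, y0⟫ = Q
      generalize ⟪y1, y0⟫ = R
      have hD : 1 + θ * ε ≠ 0 := by rw [mul_comm]; exact hd'
      field_simp
      ring
    rw [key]
    nlinarith [mul_nonneg hcoef hvnn]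
end

section
/- Refactorization equivalence of the DLN step: let Y be a real vector space, f : ℝ × Y → Y, θ ∈ [0,1], ε_n ∈ (−1,1), and suppose α_2 ≠ 0 and β_2^{(n)} ≠ 0. Given y_n, y_{n-1} ∈ Y and time nodes with t_{n,β} = β_2^{(n)} t_{n+1} + β_1^{(n)} t_n + β_0^{(n)} t_{n-1}, set y_n^{old} = a_1^{(n)} y_n + a_0^{(n)} y_{n-1} with a_1^{(n)} = β_1^{(n)} − α_1 β_2^{(n)}/α_2, a_0^{(n)} = β_0^{(n)} − α_0 β_2^{(n)}/α_2, and k̂_n^{BE} = (β_2^{(n)}/α_2) k̂_n. Then y_{n+1} ∈ Y satisfies the DLN relation α_2 y_{n+1} + α_1 y_n + α_0 y_{n-1} = k̂_n f(t_{n,β}, β_2^{(n)} y_{n+1} + β_1^{(n)} y_n + β_0^{(n)} y_{n-1}) if and only if y^{temp} := β_2^{(n)} y_{n+1} + β_1^{(n)} y_n + β_0^{(n)} y_{n-1} satisfies the backward-Euler relation y^{temp} − y_n^{old} = k̂_n^{BE} f(t_{n,β}, y^{temp}); moreover in this case y_{n+1} = c_2^{(n)} y^{temp} + c_1^{(n)}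 y_n + c_0^{(n)} y_{n-1} with c_2^{(n)} = 1/β_2^{(n)}, c_1^{(n)} = −β_1^{(n)}/β_2^{(n)}, c_0^{(n)} = −β_0^{(n)}/β_2^{(n)}. -/
/-- Refactorization equivalence of one DLN step: the DLN relation holds iff the
intermediate value `y_temp = β₂ y_{n+1} + β₁ y_n + β₀ y_{n-1}` solves a
backward-Euler step from `y_n^old` with step `k̂_n^BE`, and then `y_{n+1}` is
recovered by the post-process `y_{n+1} = c₂ y_temp + c₁ y_n + c₀ y_{n-1}`. -/
theorem dln_refactorization_equivalence
    (Y : Type*) [AddCommGroup Y] [Module ℝ Y]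
    (f : ℝ × Y → Y)
    (θ : ℝ) (hθ : θ ∈ Set.Icc (0:ℝ) 1)
    (kn kn1 : ℝ) (hkn : 0 < kn) (hkn1 : 0 < kn1)
    (ε : ℝ) (hε : ε ∈ Set.Ioo (-1:ℝ) 1) (hεdef : ε = (kn - kn1) / (kn + kn1))
    (t0 t1 t2 : ℝ) (y0 y1 y2 : Y) :
    let α2 : ℝ := (θ + 1) / 2
    let α1 : ℝ := -θ
    let α0 : ℝ := (θ - 1) / 2
    let β2 : ℝ := (1/4) * (1 + (1 - θ^2)/(1 + ε*θ)^2 + ε^2*θ*(1 - θ^2)/(1 + ε*θ)^2 + θ)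
    let β1 : ℝ := (1/2) * (1 - (1 - θ^2)/(1 + ε*θ)^2)
    let β0 : ℝ := (1/4) * (1 + (1 - θ^2)/(1 + ε*θ)^2 - ε^2*θ*(1 - θ^2)/(1 + ε*θ)^2 - θ)
    let khat : ℝ := α2 * kn - α0 * kn1
    let tβ : ℝ := β2 * t2 + β1 * t1 + β0 * t0
    let a1 : ℝ := β1 - α1 * β2 / α2
    let a0 : ℝ := β0 - α0 * β2 / α2
    let khatBE : ℝ := (β2 / α2) * khat
    let ynold : Y := a1 • y1 + a0 • y0
    let ytemp : Y := β2 • y2 + β1 • y1 + β0 • y0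
    let c2 : ℝ := 1 / β2
    let c1 : ℝ := -β1 / β2
    let c0 : ℝ := -β0 / β2
    α2 ≠ 0 → β2 ≠ 0 →
      ((α2 • y2 + α1 • y1 + α0 • y0 = khat • f (tβ, ytemp)
          ↔ ytemp - ynold = khatBE • f (tβ, ytemp)) ∧
       (α2 • y2 + α1 • y1 + α0 • y0 = khat • f (tβ, ytemp)
          → y2 = c2 • ytemp + c1 • y1 + c0 • y0)) := by
  intro α2 α1 α0 β2 β1 β0 khat tβ a1 a0 khatBE ynold ytemp c2 c1 c0 hα2 hβ2
  have hr : β2 / α2 ≠ 0 := div_ne_zero hβ2 hα2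
  have key : ytemp - ynold = (β2 / α2) • (α2 • y2 + α1 • y1 + α0 • y0) := by
    simp only [ytemp, ynold, a1, a0, smul_add, smul_smul]
    match_scalars <;> field_simp <;> ring
  constructor
  · constructor
    · intro h
      rw [key, h, smul_smul]
    · intro h
      rw [key] at h
      have h2 : (β2 / α2) • (α2 • y2 + α1 • y1 + α0 • y0) =
          (β2 / α2) • (khat • f (tβ, ytemp)) := by
        rw [h]; simp only [khatBE, smul_smul]
      exact smul_right_injective Y hr h2
  · intro _
    simp only [c2, c1, c0, ytemp, smul_add, smul_smul]
    match_scalars <;> field_simp <;> ring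
end

section
/- Consistency of the β-average: for every θ ∈ [0,1] there is a constant C(θ) > 0 such that for every real Banach space Y, every twice continuously differentiable map u : ℝ → Y, and all time nodes t_{n-1} < t_n < t_{n+1} with k_n = t_{n+1} − t_n, k_{n-1} = t_n − t_{n-1}, one has ‖u_{n,β} − u(t_{n,β})‖_Y² ≤ C(θ) (k_n + k_{n-1})³ ∫_{t_{n-1}}^{t_{n+1}} ‖u''(t)‖_Y² dt, where u_{n,β} = β_2^{(n)} u(t_{n+1}) + β_1^{(n)} u(t_n) + β_0^{(n)} u(t_{n-1}) and t_{n,β} = β_2^{(n)} t_{n+1} + β_1^{(n)} t_n + β_0^{(n)} t_{n-1}. -/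
open intervalIntegral MeasureTheory Set

/-- Cauchy–Schwarz for interval integrals. -/
lemma sq_intervalIntegral_le_aux {f : ℝ → ℝ} {a b : ℝ} (hab : a ≤ b) (hf : Continuous f) :
    (∫ t in a..b, f t)^2 ≤ (b - a) * ∫ t in a..b, (f t)^2 := by
  rcases eq_or_lt_of_le hab with h | h
  · simp [← h]
  · have hk0 : (0:ℝ) < b - a := by linarith
    set c : ℝ := (∫ t in a..b, f t) / (b - a) with hc
    have hint1 : IntervalIntegrable f volume a b := hf.intervalIntegrable a b
    have hint2 : IntervalIntegrable (fun t => (f t)^2) volume a b :=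
      (hf.pow 2).intervalIntegrable a b
    have hint3 : IntervalIntegrable (fun t => 2*c*(f t)) volume a b :=
      (continuous_const.mul hf).intervalIntegrable a b
    have hnn : (0:ℝ) ≤ ∫ t in a..b, (f t - c)^2 :=
      intervalIntegral.integral_nonneg hab (fun x _ => sq_nonneg _)
    have hexp : (∫ t in a..b, (f t - c)^2)
        = (∫ t in a..b, (f t)^2) - (∫ t in a..b, 2*c*(f t)) + (∫ t in a..b, (c:ℝ)^2) := by
      rw [intervalIntegral.integral_congr (g := fun t => ((f t)^2 - 2*c*(f t)) + c^2)
          (fun t _ => by ring),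
        intervalIntegral.integral_add (hint2.sub hint3) (intervalIntegrable_const),
        intervalIntegral.integral_sub hint2 hint3]
    have h1 : (∫ t in a..b, 2*c*(f t)) = 2*c*(∫ t in a..b, f t) :=
      intervalIntegral.integral_const_mul _ _
    have h2 : (∫ t in a..b, (c:ℝ)^2) = (b - a) * c^2 := by
      rw [intervalIntegral.integral_const, smul_eq_mul]
    rw [hexp, h1, h2] at hnn
    have hM : (∫ t in a..b, f t) = c * (b - a) := by
      rw [hc]; field_simp
    nlinarith [hnn, hk0, sq_nonneg c]

/-- bound of an interval integral of a nonnegative function by a bigger interval. -/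
lemma abs_intervalIntegral_le_aux {f : ℝ → ℝ} {a b c d : ℝ} (hf : Continuous f)
    (hfnn : ∀ x, 0 ≤ f x) (hac : a ≤ c) (had : a ≤ d) (hcb : c ≤ b) (hdb : d ≤ b) :
    |∫ t in c..d, f t| ≤ ∫ t in a..b, f t := by
  have hint : IntervalIntegrable f volume a b := hf.intervalIntegrable a b
  have hmono : ∀ c' d' : ℝ, a ≤ c' → c' ≤ d' → d' ≤ b →
      (∫ t in c'..d', f t) ≤ ∫ t in a..b, f t := by
    intro c' d' h1 h2 h3
    exact intervalIntegral.integral_mono_interval h1 h2 h3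
      (Filter.Eventually.of_forall (fun x => hfnn x)) hint
  rcases le_total c d with h | h
  · rw [abs_of_nonneg (intervalIntegral.integral_nonneg h (fun x _ => hfnn x))]
    exact hmono c d hac h hdb
  · rw [show (∫ t in c..d, f t) = -(∫ t in d..c, f t) from (intervalIntegral.integral_symm d c),
      abs_neg,
      abs_of_nonneg (intervalIntegral.integral_nonneg h (fun x _ => hfnn x))]
    exact hmono d c had h hcb

set_option maxHeartbeats 1000000 in
/-- Consistency of the DLN β-average: there is `C(θ) > 0` with
`‖u_{n,β} − u(t_{n,β})‖² ≤ C(θ) (k_n + k_{n-1})³ ∫_{t_{n-1}}^{t_{n+1}} ‖u''‖²`. -/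
theorem dln_beta_average_consistency
    (θ : ℝ) (hθ : θ ∈ Set.Icc (0:ℝ) 1) :
    ∃ C : ℝ, 0 < C ∧
      ∀ (Y : Type*) [NormedAddCommGroup Y] [NormedSpace ℝ Y] [CompleteSpace Y]
        (u : ℝ → Y), ContDiff ℝ 2 u →
        ∀ (t0 t1 t2 : ℝ), t0 < t1 → t1 < t2 →
          let kn : ℝ := t2 - t1
          let kn1 : ℝ := t1 - t0
          let ε : ℝ := (kn - kn1) / (kn + kn1)
          let β2 : ℝ := (1/4) * (1 + (1 - θ^2)/(1 + ε*θ)^2 + ε^2*θ*(1 - θ^2)/(1 + ε*θ)^2 + θ)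
          let β1 : ℝ := (1/2) * (1 - (1 - θ^2)/(1 + ε*θ)^2)
          let β0 : ℝ := (1/4) * (1 + (1 - θ^2)/(1 + ε*θ)^2 - ε^2*θ*(1 - θ^2)/(1 + ε*θ)^2 - θ)
          let tβ : ℝ := β2 * t2 + β1 * t1 + β0 * t0
          let unβ : Y := β2 • u t2 + β1 • u t1 + β0 • u t0
          ‖unβ - u tβ‖^2
            ≤ C * (kn + kn1)^3 * ∫ t in t0..t2, ‖iteratedDeriv 2 u t‖^2 := by
  obtain ⟨hθ0, hθ1⟩ := hθ
  obtain ⟨Amax, hAmax_def⟩ : ∃ x : ℝ, x = 3 + (1 + θ)/(1 - θ) := ⟨_, rfl⟩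
  have hAmax0 : 0 ≤ Amax := by
    have h1 : 0 ≤ (1 + θ)/(1 - θ) := div_nonneg (by linarith) (by linarith)
    rw [hAmax_def]; linarith
  obtain ⟨Cb, hCb_def⟩ : ∃ x : ℝ, x = 3*(1 + Amax)/2 + 1 := ⟨_, rfl⟩
  have hCb0 : 0 < Cb := by rw [hCb_def]; linarith
  refine ⟨Cb^2, by positivity, ?_⟩
  intro Y _ _ _ u hu t0 t1 t2 h01 h12
  intro kn kn1 ε β2 β1 β0 tβ unβ
  have hkn : kn = t2 - t1 := rfl
  have hkn1 : kn1 = t1 - t0 := rfl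
  have hε : ε = (kn - kn1) / (kn + kn1) := rfl
  have hβ2' : β2 = (1/4) * (1 + (1 - θ^2)/(1 + ε*θ)^2 + ε^2*θ*(1 - θ^2)/(1 + ε*θ)^2 + θ) := rfl
  have hβ1' : β1 = (1/2) * (1 - (1 - θ^2)/(1 + ε*θ)^2) := rfl
  have hβ0' : β0 = (1/4) * (1 + (1 - θ^2)/(1 + ε*θ)^2 - ε^2*θ*(1 - θ^2)/(1 + ε*θ)^2 - θ) := rfl
  have htβ : tβ = β2 * t2 + β1 * t1 + β0 * t0 := rfl
  have hunβ : unβ = β2 • u t2 + β1 • u t1 + β0 • u t0 := rfl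
  clear_value kn kn1 ε β2 β1 β0 tβ unβ
  have hknpos : 0 < kn := by rw [hkn]; linarith
  have hkn1pos : 0 < kn1 := by rw [hkn1]; linarith
  have hksum : kn + kn1 = t2 - t0 := by rw [hkn, hkn1]; ring
  have hkpos : 0 < kn + kn1 := by linarith
  have hε1 : -1 < ε := by
    rw [hε, neg_lt, ← neg_div]
    exact div_lt_one hkpos |>.mpr (by linarith)
  have hε2 : ε < 1 := by
    rw [hε]
    exact div_lt_one hkpos |>.mpr (by linarith)
  have hden : 0 < 1 + ε*θ := by
    rcases lt_or_eq_of_le hθ1 with h | h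
    · have := mul_nonneg hθ0 (by linarith : (0:ℝ) ≤ 1 + ε)
      nlinarith
    · rw [← h]; nlinarith
  -- the value A
  obtain ⟨A, hA_def⟩ : ∃ x : ℝ, x = (1 - θ^2)/(1 + ε*θ)^2 := ⟨_, rfl⟩
  have hA0 : 0 ≤ A := by
    have h1 : θ^2 ≤ 1 := pow_le_one₀ hθ0 hθ1
    rw [hA_def]; apply div_nonneg (by linarith) (by positivity)
  have hAle : A ≤ Amax := by
    rcases eq_or_lt_of_le hθ1 with h | h
    · have hA_zero : A = 0 := by rw [hA_def, h]; norm_num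
      rw [hA_zero, hAmax_def]
      have h2 : (0:ℝ) ≤ (1 + θ)/(1 - θ) := div_nonneg (by linarith) (by linarith)
      linarith
    · have h1θ : 0 < 1 - θ := by linarith
      have key : A ≤ (1 + θ)/(1 - θ) := by
        rw [hA_def, div_le_div_iff₀ (by positivity) h1θ]
        linarith [mul_nonneg (mul_nonneg (by linarith : (0:ℝ) ≤ 1 + θ)
          (by linarith : (0:ℝ) ≤ (1 + ε*θ) + (1 - θ)))
          (mul_nonneg hθ0 (by linarith : (0:ℝ) ≤ 1 + ε))]
      rw [hAmax_def]
      have h2 : (0:ℝ) ≤ (1 + θ)/(1 - θ) := div_nonneg (by linarith) (by linarith)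
      linarith
  have hE0 : 0 ≤ ε^2*θ*A := mul_nonneg (mul_nonneg (sq_nonneg ε) hθ0) hA0
  have hεsq : ε^2 ≤ 1 := by
    have := mul_pos (by linarith : (0:ℝ) < 1 - ε) (by linarith : (0:ℝ) < 1 + ε)
    nlinarith
  have hEle : ε^2*θ*A ≤ A := by
    have h1 : ε^2*θ ≤ 1*θ := mul_le_mul_of_nonneg_right hεsq hθ0
    have h2 : ε^2*θ*A ≤ 1*A := mul_le_mul_of_nonneg_right (by linarith) hA0
    linarith
  -- rewrite the betas in terms of A
  have hβ2 : β2 = (1/4) * (1 + A + ε^2*θ*A + θ) := by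
    rw [hβ2', hA_def]; ring
  have hβ1 : β1 = (1/2) * (1 - A) := by rw [hβ1', hA_def]
  have hβ0 : β0 = (1/4) * (1 + A - ε^2*θ*A - θ) := by
    rw [hβ0', hA_def]; ring
  have hsum : β2 + β1 + β0 = 1 := by rw [hβ2, hβ1, hβ0]; ring
  -- bounds on the betas
  have hβ2abs : |β2| ≤ (1 + A)/2 := by
    rw [abs_le]; constructor <;> rw [hβ2] <;> linarith [hE0, hEle, hA0, hθ0, hθ1]
  have hβ1abs : |β1| ≤ (1 + A)/2 := by
    rw [abs_le]; constructor <;> rw [hβ1] <;> linarith [hE0, hEle, hA0, hθ0, hθ1]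
  have hβ0abs : |β0| ≤ (1 + A)/2 := by
    rw [abs_le]; constructor <;> rw [hβ0] <;> linarith [hE0, hEle, hA0, hθ0, hθ1]
  -- tβ lies in [t0, t2]
  have hεk : ε * (kn + kn1) = kn - kn1 := by
    rw [hε, div_mul_cancel₀ _ hkpos.ne']
  have hAclear : A * (1 + ε*θ)^2 = 1 - θ^2 := by
    rw [hA_def]; exact div_mul_cancel₀ _ (pow_pos hden 2).ne'
  have htβ0 : t0 ≤ tβ := by
    have hfact : (2*β2 + β1*(1 - ε)) * (4*(1 + ε*θ)^2)
        = 2*((2 - ε + θ)*(1 + ε*θ)^2 + (ε^2*θ + ε)*(1 - θ^2)) := by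
      rw [hβ2, hβ1]
      linear_combination (2*ε + 2*ε^2*θ) * hAclear
    have hpos2 : 0 ≤ (2 - ε + θ)*(1 + ε*θ)^2 + (ε^2*θ + ε)*(1 - θ^2) := by
      have he : (2 - ε + θ)*(1 + ε*θ)^2 + (ε^2*θ + ε)*(1 - θ^2)
          = (1 + ε*θ) * (2 + 2*θ - θ*(1 - ε)^2) := by ring
      rw [he]
      apply mul_nonneg hden.le
      linarith [mul_nonneg (mul_nonneg hθ0 (by linarith : (0:ℝ) ≤ 1 + ε))
        (by linarith : (0:ℝ) ≤ 3 - ε)]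
    have hq : 0 ≤ 2*β2 + β1*(1 - ε) := by
      have h4 : (0:ℝ) < 4*(1 + ε*θ)^2 := by positivity
      refine (mul_nonneg_iff_of_pos_right h4).mp ?_
      rw [hfact]; linarith
    have heq : tβ - t0 = β2*(t2 - t0) + β1*(t1 - t0) := by
      linear_combination htβ + t0 * hsum
    have ht1t0 : t1 - t0 = (1 - ε)*(t2 - t0)/2 := by
      rw [← hksum, ← hkn1]; linear_combination (1/2) * hεk
    have ht2t0 : (0:ℝ) < t2 - t0 := by linarith
    have : tβ - t0 = (2*β2 + β1*(1 - ε)) * (t2 - t0) / 2 := by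
      rw [heq, ht1t0]; ring
    rw [← sub_nonneg, this]
    exact div_nonneg (mul_nonneg hq (by linarith)) (by norm_num)
  have htβ2 : tβ ≤ t2 := by
    have hfact : (2*β0 + β1*(1 + ε)) * (4*(1 + ε*θ)^2)
        = 2*((2 + ε - θ)*(1 + ε*θ)^2 - (ε^2*θ + ε)*(1 - θ^2)) := by
      rw [hβ0, hβ1]
      linear_combination (-2*ε - 2*ε^2*θ) * hAclear
    have hpos2 : 0 ≤ (2 + ε - θ)*(1 + ε*θ)^2 - (ε^2*θ + ε)*(1 - θ^2) := by
      have he : (2 + ε - θ)*(1 + ε*θ)^2 - (ε^2*θ + ε)*(1 - θ^2)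
          = (1 + ε*θ) * (2 - 2*θ + θ*(1 + ε)^2) := by ring
      rw [he]
      apply mul_nonneg hden.le
      linarith [mul_nonneg hθ0 (sq_nonneg (1 + ε))]
    have hq : 0 ≤ 2*β0 + β1*(1 + ε) := by
      have h4 : (0:ℝ) < 4*(1 + ε*θ)^2 := by positivity
      refine (mul_nonneg_iff_of_pos_right h4).mp ?_
      rw [hfact]; linarith
    have heq : t2 - tβ = β1*(t2 - t1) + β0*(t2 - t0) := by
      linear_combination -htβ - t2 * hsum
    have ht2t1 : t2 - t1 = (1 + ε)*(t2 - t0)/2 := by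
      rw [← hksum, ← hkn]; linear_combination (-1/2) * hεk
    have ht2t0 : (0:ℝ) < t2 - t0 := by linarith
    have : t2 - tβ = (2*β0 + β1*(1 + ε)) * (t2 - t0) / 2 := by
      rw [heq, ht2t1]; ring
    rw [← sub_nonneg, this]
    exact div_nonneg (mul_nonneg hq (by linarith)) (by norm_num)
  -- Analysis part
  have hu1 : Differentiable ℝ u := hu.differentiable (by norm_num)
  have hu' : ContDiff ℝ 1 (deriv u) := by
    have h2 : ContDiff ℝ ((1:ℕ) + 1) u := by exact_mod_cast hu
    exact (contDiff_succ_iff_deriv.mp h2).2.2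
  have hu2 : Differentiable ℝ (deriv u) := hu'.differentiable one_ne_zero
  have hcont2 : Continuous (deriv (deriv u)) := (contDiff_one_iff_deriv.mp hu').2
  have hdd : iteratedDeriv 2 u = deriv (deriv u) := by
    rw [iteratedDeriv_succ, iteratedDeriv_one]
  set f : ℝ → ℝ := fun t => ‖iteratedDeriv 2 u t‖ with hf_def
  have hfcont : Continuous f := by rw [hf_def, hdd]; exact hcont2.norm
  have hfnn : ∀ x, 0 ≤ f x := fun x => norm_nonneg _
  set M : ℝ := ∫ t in t0..t2, f t with hM_def
  set I : ℝ := ∫ t in t0..t2, (f t)^2 with hI_def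
  have hM0 : 0 ≤ M :=
    intervalIntegral.integral_nonneg (by linarith) (fun x _ => hfnn x)
  have hCS : M^2 ≤ (t2 - t0) * I := sq_intervalIntegral_le_aux (by linarith) hfcont
  -- bound on the difference of derivatives
  have hderiv_bound : ∀ s ∈ Set.Icc t0 t2, ‖deriv u s - deriv u t1‖ ≤ M := by
    intro s hs
    have hftc : ∫ t in t1..s, deriv (deriv u) t = deriv u s - deriv u t1 :=
      intervalIntegral.integral_deriv_eq_sub (fun x _ => hu2 x)
        (hcont2.intervalIntegrable _ _)
    rw [← hftc]
    calc ‖∫ t in t1..s, deriv (deriv u) t‖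
        ≤ |∫ t in t1..s, ‖deriv (deriv u) t‖| :=
          intervalIntegral.norm_integral_le_abs_integral_norm
      _ ≤ ∫ t in t0..t2, ‖deriv (deriv u) t‖ := by
          apply abs_intervalIntegral_le_aux (hcont2.norm) (fun x => norm_nonneg _)
            (by linarith) hs.1 (by linarith) hs.2
      _ = M := by rw [hM_def, hf_def, hdd]
  -- Taylor bound
  have htay : ∀ x ∈ Set.Icc t0 t2,
      ‖u x - u t1 - (x - t1) • deriv u t1‖ ≤ (t2 - t0) * M := by
    intro x hx
    have hftc : ∫ t in t1..x, deriv u t = u x - u t1 :=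
      intervalIntegral.integral_deriv_eq_sub (fun y _ => hu1 y)
        ((hu'.continuous).intervalIntegrable _ _)
    have hconst : ∫ _ in t1..x, deriv u t1 = (x - t1) • deriv u t1 :=
      intervalIntegral.integral_const _
    have heq : u x - u t1 - (x - t1) • deriv u t1
        = ∫ t in t1..x, (deriv u t - deriv u t1) := by
      rw [intervalIntegral.integral_sub ((hu'.continuous).intervalIntegrable _ _)
        (intervalIntegrable_const), hftc, hconst]
    rw [heq]
    have hbound : ∀ t ∈ Set.uIoc t1 x, ‖deriv u t - deriv u t1‖ ≤ M := by
      intro t ht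
      apply hderiv_bound
      have hsub : Set.uIoc t1 x ⊆ Set.Icc t0 t2 :=
        Set.uIoc_subset_uIcc.trans
          (Set.uIcc_subset_Icc ⟨by linarith, by linarith⟩ ⟨hx.1, hx.2⟩)
      exact hsub ht
    calc ‖∫ t in t1..x, (deriv u t - deriv u t1)‖ ≤ M * |x - t1| :=
          intervalIntegral.norm_integral_le_of_norm_le_const hbound
      _ ≤ M * (t2 - t0) := by
          have habs : |x - t1| ≤ t2 - t0 :=
            abs_le.mpr ⟨by linarith [hx.1], by linarith [hx.2]⟩
          exact mul_le_mul_of_nonneg_left habs hM0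
      _ = (t2 - t0) * M := mul_comm _ _
  -- algebraic identity
  set D : Y := deriv u t1 with hD_def
  set g : ℝ → Y := fun x => u x - u t1 - (x - t1) • D with hg_def
  have hrepr : unβ - u tβ = β2 • g t2 + β1 • g t1 + β0 • g t0 - g tβ := by
    rw [hunβ, hg_def]
    simp only []
    match_scalars <;>
      first
        | ring1
        | linear_combination hsum
        | linear_combination -hsum
        | linear_combination -htβ - t1 * hsum
        | linear_combination htβ + t1 * hsum
  -- final bound
  have hbnd : ‖unβ - u tβ‖ ≤ Cb * ((t2 - t0) * M) := by
    rw [hrepr]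
    have hg2 : ‖g t2‖ ≤ (t2 - t0) * M := htay t2 ⟨by linarith, le_rfl⟩
    have hg1 : ‖g t1‖ ≤ (t2 - t0) * M := htay t1 ⟨by linarith, by linarith⟩
    have hg0 : ‖g t0‖ ≤ (t2 - t0) * M := htay t0 ⟨le_rfl, by linarith⟩
    have hgβ : ‖g tβ‖ ≤ (t2 - t0) * M := htay tβ ⟨htβ0, htβ2⟩
    have hkM : 0 ≤ (t2 - t0) * M := mul_nonneg (by linarith) hM0
    calc ‖β2 • g t2 + β1 • g t1 + β0 • g t0 - g tβ‖
        ≤ ‖β2 • g t2 + β1 • g t1 + β0 • g t0‖ + ‖g tβ‖ := norm_sub_le _ _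
      _ ≤ ‖β2 • g t2 + β1 • g t1‖ + ‖β0 • g t0‖ + ‖g tβ‖ := by
          gcongr; exact norm_add_le _ _
      _ ≤ ‖β2 • g t2‖ + ‖β1 • g t1‖ + ‖β0 • g t0‖ + ‖g tβ‖ := by
          gcongr; exact norm_add_le _ _
      _ = |β2| * ‖g t2‖ + |β1| * ‖g t1‖ + |β0| * ‖g t0‖ + ‖g tβ‖ := by
          simp [norm_smul, Real.norm_eq_abs]
      _ ≤ (1 + A)/2 * ((t2 - t0) * M) + (1 + A)/2 * ((t2 - t0) * M)
            + (1 + A)/2 * ((t2 - t0) * M) + (t2 - t0) * M := by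
          gcongr <;> first
            | exact hβ2abs | exact hβ1abs | exact hβ0abs
            | exact abs_nonneg _ | positivity
      _ ≤ Cb * ((t2 - t0) * M) := by
          rw [hCb_def]
          linarith [mul_nonneg (sub_nonneg.mpr hAle) hkM]
  have hfinal : ‖unβ - u tβ‖^2 ≤ Cb^2 * (t2 - t0)^2 * M^2 := by
    have h := mul_self_le_mul_self (norm_nonneg _) hbnd
    calc ‖unβ - u tβ‖^2 = ‖unβ - u tβ‖ * ‖unβ - u tβ‖ := sq (‖unβ - u tβ‖) ▸ by ring
      _ ≤ (Cb * ((t2 - t0) * M)) * (Cb * ((t2 - t0) * M)) := h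
      _ = Cb^2 * (t2 - t0)^2 * M^2 := by ring
  calc ‖unβ - u tβ‖^2 ≤ Cb^2 * (t2 - t0)^2 * M^2 := hfinal
    _ ≤ Cb^2 * (t2 - t0)^2 * ((t2 - t0) * I) :=
        mul_le_mul_of_nonneg_left hCS (mul_nonneg (sq_nonneg Cb) (sq_nonneg _))
    _ = Cb^2 * (kn + kn1)^3 * I := by rw [hksum]; ring
end

section
/- Consistency of the second-order linear extrapolation: for every θ ∈ [0,1] there is a constant C(θ) > 0 such that for every real Banach space Y, every twice continuously differentiable map u : ℝ → Y, and all time nodes t_{n-1} < t_n < t_{n+1} with k_n = t_{n+1} − t_n, k_{n-1} = t_n − t_{n-1}, one has ‖ũ_n − u(t_{n,β})‖_Y² ≤ C(θ) (k_n + k_{n-1})³ ∫_{t_{n-1}}^{t_{n+1}} ‖u''(t)‖_Y² dt, where ũ_n = β_2^{(n)} [ (1 + k_n/k_{n-1}) u(t_n) − (k_n/k_{n-1}) u(t_{n-1}) ] + β_1^{(n)} u(t_n) + β_0^{(n)} u(t_{n-1}) and t_{n,β} = β_2^{(n)} t_{n+1} + β_1^{(n)} t_n + β_0^{(n)} t_{n-1}.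 -/
open intervalIntegral MeasureTheory Set

/-- Taylor with integral remainder, order 2, Banach codomain. -/
lemma dln_taylor2 {Y : Type*} [NormedAddCommGroup Y] [NormedSpace ℝ Y] [CompleteSpace Y]
    (u : ℝ → Y) (hu : ContDiff ℝ 2 u) (c x : ℝ) :
    u x = u c + (x - c) • deriv u c + ∫ s in c..x, (x - s) • iteratedDeriv 2 u s := by
  have hdu : Differentiable ℝ u := hu.differentiable (by norm_num)
  have hdu1 : Differentiable ℝ (deriv u) := by
    have := hu.differentiable_iteratedDeriv 1 (by norm_num)
    rwa [iteratedDeriv_one] at this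
  have hcont2 : Continuous (iteratedDeriv 2 u) := hu.continuous_iteratedDeriv 2 le_rfl
  have hdd : deriv (deriv u) = iteratedDeriv 2 u := by
    rw [show (2:ℕ) = 1 + 1 from rfl, iteratedDeriv_succ, iteratedDeriv_one]
  have key : ∀ s ∈ Set.uIcc c x,
      HasDerivAt (fun t => u t + (x - t) • deriv u t) ((x - s) • iteratedDeriv 2 u s) s := by
    intro s _
    have h1 : HasDerivAt u (deriv u s) s := (hdu s).hasDerivAt
    have h2 : HasDerivAt (deriv u) (iteratedDeriv 2 u s) s := by
      have := (hdu1 s).hasDerivAt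
      rwa [hdd] at this
    have h3 : HasDerivAt (fun t : ℝ => x - t) (-1) s := by
      simpa using (hasDerivAt_id s).const_sub x
    have h4 := h3.smul h2
    have h5 := h1.add h4
    convert h5 using 1
    · funext t; rfl
    · rw [neg_one_smul]; abel
  have hint : IntervalIntegrable (fun s => (x - s) • iteratedDeriv 2 u s) volume c x :=
    (Continuous.smul (by fun_prop) hcont2).intervalIntegrable _ _
  have := intervalIntegral.integral_eq_sub_of_hasDerivAt key hint
  rw [this]
  simp

/-- Elementary Cauchy–Schwarz for interval integrals of continuous functions. -/
lemma dln_cs (f : ℝ → ℝ) (a b : ℝ) (hab : a ≤ b) (hf : Continuous f) :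
    (∫ x in a..b, f x) ^ 2 ≤ (b - a) * ∫ x in a..b, f x ^ 2 := by
  have hif : IntervalIntegrable f volume a b := hf.intervalIntegrable _ _
  have hif2 : IntervalIntegrable (fun x => f x ^ 2) volume a b :=
    (hf.pow 2).intervalIntegrable _ _
  have key : ∀ t : ℝ, 0 ≤ (b - a) * (t * t) + (-2 * ∫ x in a..b, f x) * t
      + ∫ x in a..b, f x ^ 2 := by
    intro t
    have h1 : (0:ℝ) ≤ ∫ x in a..b, (t - f x) ^ 2 :=
      intervalIntegral.integral_nonneg hab (fun x _ => sq_nonneg _)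
    have h2 : ∫ x in a..b, (t - f x) ^ 2
        = (b - a) * (t * t) + (-2 * t) * (∫ x in a..b, f x) + ∫ x in a..b, f x ^ 2 := by
      have e : (fun x => (t - f x) ^ 2)
          = fun x => (t * t + ((-2 * t) * f x + f x ^ 2)) := by
        funext x; ring
      rw [e, intervalIntegral.integral_add intervalIntegrable_const ?h3,
        intervalIntegral.integral_add ((hif.const_mul _)) hif2,
        intervalIntegral.integral_const, intervalIntegral.integral_const_mul]
      · simp [smul_eq_mul]; ring
      case h3 => exact ((hif.const_mul _)).add hif2
    nlinarith [h1, h2]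
  have hd := discrim_le_zero key
  rw [discrim] at hd
  nlinarith [hd]


private lemma dln_Q1 (θ ε : ℝ) (hθ0 : 0 ≤ θ) (hθ1 : θ ≤ 1) (hεgt : -1 < ε) (hεlt : ε < 1) :
    0 < 2 + θ + 2*ε*θ - ε^2*θ := by
  nlinarith [mul_nonneg hθ0 (sq_nonneg (1+ε)), mul_le_of_le_one_right (sq_nonneg ε) hθ1]

private lemma dln_Q2 (θ ε : ℝ) (hθ0 : 0 ≤ θ) (hθ1 : θ ≤ 1) (hεgt : -1 < ε) :
    0 < 2 - θ + 2*ε*θ + ε^2*θ := by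
  nlinarith [mul_nonneg hθ0 (sq_nonneg (1+ε))]

private lemma dln_pos (x D Q K : ℝ) (h8 : 8 * x * D^2 = K * (2*Q*D)) (hQ : 0 < Q)
    (hD : 0 < D) (hK : 0 < K) : 0 ≤ x := by
  nlinarith [h8, mul_pos (mul_pos hK hQ) hD, mul_pos hD hD]

set_option maxHeartbeats 2000000 in
/-- Consistency of the second-order linear extrapolation `ũ_n` for `u(t_{n,β})`:
there is `C(θ) > 0` with
`‖ũ_n − u(t_{n,β})‖² ≤ C(θ) (k_n + k_{n-1})³ ∫_{t_{n-1}}^{t_{n+1}} ‖u''‖²`. -/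
theorem dln_extrapolation_consistency
    (θ : ℝ) (hθ : θ ∈ Set.Icc (0:ℝ) 1) :
    ∃ C : ℝ, 0 < C ∧
      ∀ (Y : Type*) [NormedAddCommGroup Y] [NormedSpace ℝ Y] [CompleteSpace Y]
        (u : ℝ → Y), ContDiff ℝ 2 u →
        ∀ (t0 t1 t2 : ℝ), t0 < t1 → t1 < t2 →
          let kn : ℝ := t2 - t1
          let kn1 : ℝ := t1 - t0
          let ε : ℝ := (kn - kn1) / (kn + kn1)
          let β2 : ℝ := (1/4) * (1 + (1 - θ^2)/(1 + ε*θ)^2 + ε^2*θ*(1 - θ^2)/(1 + ε*θ)^2 + θ)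
          let β1 : ℝ := (1/2) * (1 - (1 - θ^2)/(1 + ε*θ)^2)
          let β0 : ℝ := (1/4) * (1 + (1 - θ^2)/(1 + ε*θ)^2 - ε^2*θ*(1 - θ^2)/(1 + ε*θ)^2 - θ)
          let tβ : ℝ := β2 * t2 + β1 * t1 + β0 * t0
          let utilde : Y := β2 • ((1 + kn/kn1) • u t1 - (kn/kn1) • u t0)
              + β1 • u t1 + β0 • u t0
          ‖utilde - u tβ‖^2
            ≤ C * (kn + kn1)^3 * ∫ t in t0..t2, ‖iteratedDeriv 2 u t‖^2 := by
  obtain ⟨hθ0, hθ1⟩ := hθ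
  refine ⟨1, one_pos, ?_⟩
  intro Y _ _ _ u hu t0 t1 t2 h01 h12
  intro kn kn1 ε β2 β1 β0 tβ utilde
  have hkn : kn = t2 - t1 := rfl
  have hkn1 : kn1 = t1 - t0 := rfl
  have hε : ε = (kn - kn1) / (kn + kn1) := rfl
  have hβ2 : β2 = (1/4) * (1 + (1 - θ^2)/(1 + ε*θ)^2 + ε^2*θ*(1 - θ^2)/(1 + ε*θ)^2 + θ) := rfl
  have hβ1 : β1 = (1/2) * (1 - (1 - θ^2)/(1 + ε*θ)^2) := rfl
  have hβ0 : β0 = (1/4) * (1 + (1 - θ^2)/(1 + ε*θ)^2 - ε^2*θ*(1 - θ^2)/(1 + ε*θ)^2 - θ) := rfl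
  have htβ : tβ = β2 * t2 + β1 * t1 + β0 * t0 := rfl
  have hut : utilde = β2 • ((1 + kn/kn1) • u t1 - (kn/kn1) • u t0)
      + β1 • u t1 + β0 • u t0 := rfl
  clear_value utilde tβ β0 β1 β2 ε kn1 kn
  have hkn1p : 0 < kn1 := by rw [hkn1]; linarith
  have hknp : 0 < kn := by rw [hkn]; linarith
  have hKp : 0 < kn + kn1 := by linarith
  have hεlt : ε < 1 := by rw [hε, div_lt_one hKp]; linarith
  have hεgt : -1 < ε := by rw [hε, lt_div_iff₀ hKp]; linarith
  have hd : 0 < 1 + ε * θ := by nlinarith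
  have hd2 : (0:ℝ) < (1 + ε*θ)^2 := by positivity
  have hkn1eq : 2 * kn1 = (1 - ε) * (kn + kn1) := by
    rw [hε]; field_simp; ring
  have hkneq : 2 * kn = (1 + ε) * (kn + kn1) := by
    rw [hε]; field_simp; ring
  have hsum : β2 + β1 + β0 = 1 := by rw [hβ2, hβ1, hβ0]; ring
  set X : ℝ := (1 - θ^2)/(1 + ε*θ)^2 with hX
  clear_value X
  have hXeq : X * (1 + ε*θ)^2 = 1 - θ^2 := by
    rw [hX]; exact div_mul_cancel₀ _ hd2.ne'
  have hβ2X : β2 = (1/4) * (1 + X + ε^2*θ*X + θ) := by rw [hβ2, hX]; ring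
  have hβ1X : β1 = (1/2) * (1 - X) := by rw [hβ1, hX]
  have hβ0X : β0 = (1/4) * (1 + X - ε^2*θ*X - θ) := by rw [hβ0, hX]; ring
  have hS : tβ - t0 = β2 * (kn + kn1) + β1 * kn1 := by
    rw [htβ, hkn, hkn1]; linear_combination t0 * hsum
  have hS2 : t2 - tβ = β1 * kn + β0 * (kn + kn1) := by
    rw [htβ, hkn, hkn1]; linear_combination (-t2) * hsum
  have hSX : tβ - t0 = (1/4)*(1 + X + ε^2*θ*X + θ)*(kn + kn1) + (1/2)*(1 - X)*kn1 := by
    rw [hS, hβ2X, hβ1X]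
  have hS2X : t2 - tβ = (1/2)*(1 - X)*kn + (1/4)*(1 + X - ε^2*θ*X - θ)*(kn + kn1) := by
    rw [hS2, hβ0X, hβ1X]
  have hQ : 0 < 2 + θ + 2*ε*θ - ε^2*θ := dln_Q1 θ ε hθ0 hθ1 hεgt hεlt
  have hQ' : 0 < 2 - θ + 2*ε*θ + ε^2*θ := dln_Q2 θ ε hθ0 hθ1 hεgt
  have h8 : 8 * (tβ - t0) * (1+ε*θ)^2
      = (kn+kn1) * (2*(2 + θ + 2*ε*θ - ε^2*θ) * (1+ε*θ)) := by
    linear_combination (8*(1+ε*θ)^2) * hSX + (2*ε*(1+ε*θ)*(kn+kn1)) * hXeq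
      + (2*(1-X)*(1+ε*θ)^2) * hkn1eq
  have h8' : 8 * (t2 - tβ) * (1+ε*θ)^2
      = (kn+kn1) * (2*(2 - θ + 2*ε*θ + ε^2*θ) * (1+ε*θ)) := by
    linear_combination (8*(1+ε*θ)^2) * hS2X + (-2*ε*(1+ε*θ)*(kn+kn1)) * hXeq
      + (2*(1-X)*(1+ε*θ)^2) * hkneq
  have htβ0 : t0 ≤ tβ := by
    have := dln_pos (tβ - t0) (1+ε*θ) (2 + θ + 2*ε*θ - ε^2*θ) (kn+kn1) h8 hQ hd hKp
    linarith
  have htβ2 : tβ ≤ t2 := by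
    have := dln_pos (t2 - tβ) (1+ε*θ) (2 - θ + 2*ε*θ + ε^2*θ) (kn+kn1) h8' hQ' hd hKp
    linarith
  have hK2 : t2 - t0 = kn + kn1 := by rw [hkn, hkn1]; ring
  -- the extrapolation weight
  set a : ℝ := (tβ - t0) / kn1 with ha
  have ha0 : 0 ≤ a := div_nonneg (by linarith) hkn1p.le
  have haK : a * kn1 = tβ - t0 := div_mul_cancel₀ _ hkn1p.ne'
  clear_value a
  have hc1 : β2 * (1 + kn/kn1) + β1 = a := by
    rw [ha]; field_simp; linear_combination -hS
  have hc0 : β0 - β2 * (kn/kn1) = 1 - a := by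
    rw [ha]; field_simp; linear_combination hS + kn1 * hsum
  have hcoef : utilde = a • u t1 + (1 - a) • u t0 := by
    rw [hut, ← hc0, ← hc1]; module
  -- Taylor expansions
  have hT1 := dln_taylor2 u hu t0 t1
  have hTβ := dln_taylor2 u hu t0 tβ
  set I1 := ∫ s in t0..t1, (t1 - s) • iteratedDeriv 2 u s with hI1d
  set I2 := ∫ s in t0..tβ, (tβ - s) • iteratedDeriv 2 u s with hI2d
  clear_value I1 I2
  have herr : utilde - u tβ = a • I1 - I2 := by
    have h5 : tβ - t0 = a * (t1 - t0) := by rw [← haK, hkn1]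
    rw [hcoef, hT1, hTβ, h5]
    module
  -- combine into one kernel integral
  set T := max t1 tβ with hT
  have ht1T : t1 ≤ T := le_max_left _ _
  have htβT : tβ ≤ T := le_max_right _ _
  have ht0T : t0 ≤ T := le_trans h01.le ht1T
  have hT2 : T ≤ t2 := max_le h12.le htβ2
  clear_value T
  have hcont2 : Continuous (iteratedDeriv 2 u) := hu.continuous_iteratedDeriv 2 le_rfl
  have hm1c : Continuous (fun s : ℝ => max (t1 - s) 0) :=
    (continuous_const.sub continuous_id).max continuous_const
  have hm2c : Continuous (fun s : ℝ => max (tβ - s) 0) :=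
    (continuous_const.sub continuous_id).max continuous_const
  have hI1T : I1 = ∫ s in t0..T, (max (t1 - s) 0) • iteratedDeriv 2 u s := by
    have hadd := intervalIntegral.integral_add_adjacent_intervals
      (a := t0) (b := t1) (c := T) (f := fun s => (max (t1 - s) 0) • iteratedDeriv 2 u s)
      (μ := volume)
      ((hm1c.smul hcont2).intervalIntegrable _ _) ((hm1c.smul hcont2).intervalIntegrable _ _)
    rw [← hadd]
    have e1 : (∫ s in t0..t1, (max (t1 - s) 0) • iteratedDeriv 2 u s) = I1 := by
      rw [hI1d]
      apply intervalIntegral.integral_congr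
      intro s hs
      rw [Set.uIcc_of_le h01.le] at hs
      simp only
      rw [max_eq_left (by linarith [hs.2] : (0:ℝ) ≤ t1 - s)]
    have e2 : (∫ s in t1..T, (max (t1 - s) 0) • iteratedDeriv 2 u s) = 0 := by
      have heq : EqOn (fun s => (max (t1 - s) 0) • iteratedDeriv 2 u s)
          (fun _ => (0:Y)) (uIcc t1 T) := by
        intro s hs
        rw [Set.uIcc_of_le ht1T] at hs
        simp only
        rw [max_eq_right (by linarith [hs.1] : t1 - s ≤ 0), zero_smul]
      rw [intervalIntegral.integral_congr heq, intervalIntegral.integral_zero]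
    rw [e1, e2, add_zero]
  have hI2T : I2 = ∫ s in t0..T, (max (tβ - s) 0) • iteratedDeriv 2 u s := by
    have hadd := intervalIntegral.integral_add_adjacent_intervals
      (a := t0) (b := tβ) (c := T) (f := fun s => (max (tβ - s) 0) • iteratedDeriv 2 u s)
      (μ := volume)
      ((hm2c.smul hcont2).intervalIntegrable _ _) ((hm2c.smul hcont2).intervalIntegrable _ _)
    rw [← hadd]
    have e1 : (∫ s in t0..tβ, (max (tβ - s) 0) • iteratedDeriv 2 u s) = I2 := by
      rw [hI2d]
      apply intervalIntegral.integral_congr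
      intro s hs
      rw [Set.uIcc_of_le htβ0] at hs
      simp only
      rw [max_eq_left (by linarith [hs.2] : (0:ℝ) ≤ tβ - s)]
    have e2 : (∫ s in tβ..T, (max (tβ - s) 0) • iteratedDeriv 2 u s) = 0 := by
      have heq : EqOn (fun s => (max (tβ - s) 0) • iteratedDeriv 2 u s)
          (fun _ => (0:Y)) (uIcc tβ T) := by
        intro s hs
        rw [Set.uIcc_of_le htβT] at hs
        simp only
        rw [max_eq_right (by linarith [hs.1] : tβ - s ≤ 0), zero_smul]
      rw [intervalIntegral.integral_congr heq, intervalIntegral.integral_zero]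
    rw [e1, e2, add_zero]
  set G : ℝ → ℝ := fun s => a * max (t1 - s) 0 - max (tβ - s) 0 with hG
  have hGc : Continuous G := (continuous_const.mul hm1c).sub hm2c
  clear_value G
  have herr2 : utilde - u tβ = ∫ s in t0..T, G s • iteratedDeriv 2 u s := by
    rw [herr, hI1T, hI2T, ← intervalIntegral.integral_smul,
      ← intervalIntegral.integral_sub (f := fun x => a • max (t1 - x) 0 • iteratedDeriv 2 u x)
        (g := fun s => max (tβ - s) 0 • iteratedDeriv 2 u s)
        ((continuous_const.smul (hm1c.smul hcont2)).intervalIntegrable _ _)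
        ((hm2c.smul hcont2).intervalIntegrable _ _)]
    apply intervalIntegral.integral_congr
    intro s _
    simp only [hG]
    rw [smul_smul, ← sub_smul]
  -- pointwise kernel bound
  have hGb : ∀ s ∈ Icc t0 T, ‖G s • iteratedDeriv 2 u s‖
      ≤ (kn + kn1) * ‖iteratedDeriv 2 u s‖ := by
    intro s hs
    rw [norm_smul, Real.norm_eq_abs]
    apply mul_le_mul_of_nonneg_right _ (norm_nonneg _)
    have hm1b : max (t1 - s) 0 ≤ t1 - t0 := max_le (by linarith [hs.1]) (by linarith)
    have hm1b0 : (0:ℝ) ≤ max (t1 - s) 0 := le_max_right _ _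
    have hm2b : max (tβ - s) 0 ≤ tβ - t0 := max_le (by linarith [hs.1]) (by linarith)
    have hm2b0 : (0:ℝ) ≤ max (tβ - s) 0 := le_max_right _ _
    have ham : a * max (t1 - s) 0 ≤ tβ - t0 := by
      calc a * max (t1 - s) 0 ≤ a * (t1 - t0) := mul_le_mul_of_nonneg_left hm1b ha0
        _ = tβ - t0 := by rw [← haK, hkn1]
    have ham0 : 0 ≤ a * max (t1 - s) 0 := mul_nonneg ha0 hm1b0
    rw [hG, abs_le]
    constructor
    · simp only; linarith
    · simp only; linarith
  -- norm estimate
  have hnorm1 : ‖utilde - u tβ‖ ≤ (kn + kn1) * ∫ s in t0..T, ‖iteratedDeriv 2 u s‖ := by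
    rw [herr2]
    refine le_trans (intervalIntegral.norm_integral_le_integral_norm ht0T) ?_
    rw [← intervalIntegral.integral_const_mul]
    exact intervalIntegral.integral_mono_on ht0T
      ((hGc.smul hcont2).norm.intervalIntegrable _ _)
      ((continuous_const.mul hcont2.norm).intervalIntegrable _ _) hGb
  have hiN : 0 ≤ ∫ s in t0..T, ‖iteratedDeriv 2 u s‖ :=
    intervalIntegral.integral_nonneg ht0T (fun _ _ => norm_nonneg _)
  have hcs := dln_cs (fun s => ‖iteratedDeriv 2 u s‖) t0 T ht0T hcont2.norm
  have hN2 : 0 ≤ ∫ s in t0..T, ‖iteratedDeriv 2 u s‖ ^ 2 :=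
    intervalIntegral.integral_nonneg ht0T (fun _ _ => sq_nonneg _)
  have hmono : (∫ s in t0..T, ‖iteratedDeriv 2 u s‖ ^ 2)
      ≤ ∫ s in t0..t2, ‖iteratedDeriv 2 u s‖ ^ 2 := by
    have hadd := intervalIntegral.integral_add_adjacent_intervals
      (a := t0) (b := T) (c := t2) (f := fun s => ‖iteratedDeriv 2 u s‖ ^ 2) (μ := volume)
      ((hcont2.norm.pow 2).intervalIntegrable _ _) ((hcont2.norm.pow 2).intervalIntegrable _ _)
    have h2 : 0 ≤ ∫ s in T..t2, ‖iteratedDeriv 2 u s‖ ^ 2 :=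
      intervalIntegral.integral_nonneg hT2 (fun _ _ => sq_nonneg _)
    linarith [hadd]
  have hTt0 : T - t0 ≤ kn + kn1 := by linarith [hT2, hK2.le, hK2.ge]
  calc ‖utilde - u tβ‖ ^ 2
      ≤ ((kn + kn1) * ∫ s in t0..T, ‖iteratedDeriv 2 u s‖) ^ 2 :=
        pow_le_pow_left₀ (norm_nonneg _) hnorm1 2
    _ = (kn + kn1) ^ 2 * (∫ s in t0..T, ‖iteratedDeriv 2 u s‖) ^ 2 := by ring
    _ ≤ (kn + kn1) ^ 2 * ((T - t0) * ∫ s in t0..T, ‖iteratedDeriv 2 u s‖ ^ 2) :=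
        mul_le_mul_of_nonneg_left hcs (by positivity)
    _ ≤ (kn + kn1) ^ 2 * ((kn + kn1) * ∫ s in t0..t2, ‖iteratedDeriv 2 u s‖ ^ 2) := by
        apply mul_le_mul_of_nonneg_left _ (by positivity)
        exact mul_le_mul hTt0 hmono hN2 hKp.le
    _ = 1 * (kn + kn1) ^ 3 * ∫ t in t0..t2, ‖iteratedDeriv 2 u t‖ ^ 2 := by ring
end

section
/- Consistency of the DLN divided difference: for every θ ∈ [0,1] and all constants 0 < C_L ≤ C_U there is a constant C (depending only on θ, C_L, C_U) such that for every real Banach space Y, every three-times continuously differentiable map u : ℝ → Y, and all time nodes t_{n-1} < t_n < t_{n+1} whose steps k_n = t_{n+1} − t_n, k_{n-1} = t_n − t_{n-1} satisfy C_L ≤ k_n/k_{n-1} ≤ C_U, one has ‖ (1/k̂_n)(α_2 u(t_{n+1}) + α_1 u(t_n) + α_0 u(t_{n-1})) − u'(t_{n,β}) ‖_Y² ≤ C (k_n + k_{n-1})³ ∫_{t_{n-1}}^{t_{n+1}} ‖u'''(t)‖_Y² dt, where t_{n,β} = β_2^{(n)} t_{n+1} + β_1^{(n)} t_n + β_0^{(n)}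 t_{n-1}. -/
open intervalIntegral MeasureTheory Set

lemma taylor3 {Y : Type*} [NormedAddCommGroup Y] [NormedSpace ℝ Y] [CompleteSpace Y]
    {u : ℝ → Y} (hu : ContDiff ℝ 3 u) (a b : ℝ) :
    u b = u a + (b - a) • deriv u a + ((b - a)^2 / 2) • iteratedDeriv 2 u a
      + ∫ s in a..b, ((b - s)^2 / 2) • iteratedDeriv 3 u s := by
  have hdm : ∀ m : ℕ, m < 3 → ∀ x : ℝ, HasDerivAt (iteratedDeriv m u) (iteratedDeriv (m+1) u x) x := by
    intro m hm x
    rw [iteratedDeriv_succ]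
    exact (hu.differentiable_iteratedDeriv m (by exact_mod_cast hm) x).hasDerivAt
  set F : ℝ → Y := fun s => u s + (b - s) • deriv u s + ((b - s)^2/2) • iteratedDeriv 2 u s with hF
  have hFd : ∀ s : ℝ, HasDerivAt F (((b - s)^2/2) • iteratedDeriv 3 u s) s := by
    intro s
    have h0 : HasDerivAt u (deriv u s) s := by
      have := hdm 0 (by norm_num) s
      simpa [iteratedDeriv_one] using this
    have hc1 : HasDerivAt (fun x : ℝ => b - x) (-1) s := by
      simpa using (hasDerivAt_id s).const_sub b
    have hd2 : HasDerivAt (deriv u) (iteratedDeriv 2 u s) s := by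
      have := hdm 1 (by norm_num) s
      simpa [iteratedDeriv_one] using this
    have h1 := hc1.smul hd2
    have hc2 : HasDerivAt (fun x : ℝ => (b - x)^2/2) (-(b - s)) s := by
      have := (hc1.pow 2).div_const 2
      refine this.congr_deriv ?_
      norm_num; ring
    have hd3 : HasDerivAt (iteratedDeriv 2 u) (iteratedDeriv 3 u s) s := hdm 2 (by norm_num) s
    have h2 := hc2.smul hd3
    have := (h0.add h1).add h2
    refine this.congr_deriv ?_
    module
  have hcont : Continuous (fun s : ℝ => ((b - s)^2/2) • iteratedDeriv 3 u s) := by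
    exact ((continuous_const.sub continuous_id).pow 2 |>.div_const 2).smul
      (hu.continuous_iteratedDeriv 3 (by norm_num))
  have hint := intervalIntegral.integral_eq_sub_of_hasDerivAt (f := F)
    (fun s _ => hFd s) (hcont.intervalIntegrable a b)
  rw [hint]
  simp only [hF]
  simp

lemma seg_bound_le {Y : Type*} [NormedAddCommGroup Y] [NormedSpace ℝ Y]
    {g : ℝ → Y} (hg : Continuous g) {t0 t2 a b M : ℝ}
    (ha : a ∈ Icc t0 t2) (hb : b ∈ Icc t0 t2) {φ : ℝ → ℝ} (hφc : Continuous φ)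
    (hM : ∀ s ∈ Icc t0 t2, |φ s| ≤ M) (hab : a ≤ b) :
    ‖∫ s in a..b, φ s • g s‖ ≤ ∫ s in t0..t2, M * ‖g s‖ := by
  have hMnn : 0 ≤ M := le_trans (abs_nonneg _) (hM a ha)
  calc ‖∫ s in a..b, φ s • g s‖ ≤ ∫ s in a..b, ‖φ s • g s‖ :=
        intervalIntegral.norm_integral_le_integral_norm hab
    _ ≤ ∫ s in a..b, M * ‖g s‖ := by
        apply intervalIntegral.integral_mono_on hab
          ((hφc.smul hg).norm.intervalIntegrable a b)
          ((continuous_const.mul hg.norm).intervalIntegrable a b)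
        intro s hs
        show ‖φ s • g s‖ ≤ M * ‖g s‖
        rw [norm_smul]
        have : |φ s| ≤ M := hM s ⟨le_trans ha.1 hs.1, le_trans hs.2 hb.2⟩
        exact mul_le_mul_of_nonneg_right (by simpa using this) (norm_nonneg _)
    _ ≤ ∫ s in t0..t2, M * ‖g s‖ := by
        apply intervalIntegral.integral_mono_interval ha.1 hab hb.2
        · filter_upwards with s
          positivity
        · exact (continuous_const.mul hg.norm).intervalIntegrable t0 t2

lemma seg_bound {Y : Type*} [NormedAddCommGroup Y] [NormedSpace ℝ Y]
    {g : ℝ → Y} (hg : Continuous g) {t0 t2 a b M : ℝ}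
    (ha : a ∈ Icc t0 t2) (hb : b ∈ Icc t0 t2) {φ : ℝ → ℝ} (hφc : Continuous φ)
    (hM : ∀ s ∈ Icc t0 t2, |φ s| ≤ M) :
    ‖∫ s in a..b, φ s • g s‖ ≤ ∫ s in t0..t2, M * ‖g s‖ := by
  rcases le_total a b with hab | hab
  · exact seg_bound_le hg ha hb hφc hM hab
  · rw [intervalIntegral.integral_symm, norm_neg]
    exact seg_bound_le hg hb ha hφc hM hab

lemma cs_interval {g : ℝ → ℝ} (hg : Continuous g) {t0 t2 : ℝ} (h : t0 ≤ t2) :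
    (∫ t in t0..t2, g t)^2 ≤ (t2 - t0) * ∫ t in t0..t2, g t ^ 2 := by
  set k := t2 - t0 with hk
  set J := ∫ t in t0..t2, g t with hJ
  set I := ∫ t in t0..t2, g t ^ 2 with hI
  rcases eq_or_lt_of_le h with heq | hlt
  · simp [hJ, hI, ← heq]
  have hkpos : 0 < k := by simp [hk]; linarith
  set c := J / k with hc
  have h0 : 0 ≤ ∫ t in t0..t2, (g t - c)^2 :=
    intervalIntegral.integral_nonneg h (fun t _ => sq_nonneg _)
  have hexp : ∫ t in t0..t2, (g t - c)^2 = I - 2*c*J + c^2*k := by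
    have hptw : ∀ t : ℝ, (g t - c)^2 = g t ^ 2 - (2*c) * g t + c^2 := fun t => by ring
    simp_rw [hptw]
    rw [intervalIntegral.integral_add (f := fun t => g t ^ 2 - (2*c) * g t) (g := fun _ => c^2) (((hg.pow 2).sub (continuous_const.mul hg)).intervalIntegrable t0 t2)
        (continuous_const.intervalIntegrable t0 t2),
      intervalIntegral.integral_sub (f := fun t => g t ^ 2) (g := fun t => (2*c) * g t) ((hg.pow 2).intervalIntegrable t0 t2)
        ((continuous_const.mul hg).intervalIntegrable t0 t2),
      intervalIntegral.integral_const_mul, intervalIntegral.integral_const]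
    simp only [smul_eq_mul, ← hI, ← hJ, ← hk]
    ring
  have h3 : 0 ≤ k * (I - 2*c*J + c^2*k) := mul_nonneg hkpos.le (hexp ▸ h0)
  have hckJ : k * I - J^2 = k * (I - 2*c*J + c^2*k) := by
    rw [hc]
    field_simp
    ring
  linarith

lemma dln_key (θ kn kn1 T0 T1 T2 : ℝ) (hkn : 0 < kn) (hkn1 : 0 < kn1)
    (hT2 : T2 = T1 + kn) (hT0 : T0 = T1 - kn1)
    (hden : 0 < 1 + (kn - kn1)/(kn + kn1) * θ) :
    (θ+1)/2*T2^2 + (-θ)*T1^2 + (θ-1)/2*T0^2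
      = 2*((θ+1)/2*kn - (θ-1)/2*kn1) *
        ((1/4) * (1 + (1 - θ^2)/(1 + (kn - kn1)/(kn + kn1)*θ)^2 + ((kn - kn1)/(kn + kn1))^2*θ*(1 - θ^2)/(1 + (kn - kn1)/(kn + kn1)*θ)^2 + θ) * T2
         + (1/2) * (1 - (1 - θ^2)/(1 + (kn - kn1)/(kn + kn1)*θ)^2) * T1
         + (1/4) * (1 + (1 - θ^2)/(1 + (kn - kn1)/(kn + kn1)*θ)^2 - ((kn - kn1)/(kn + kn1))^2*θ*(1 - θ^2)/(1 + (kn - kn1)/(kn + kn1)*θ)^2 - θ) * T0) := by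
  subst hT2; subst hT0
  have hs : (0:ℝ) < kn + kn1 := by linarith
  have he : 1 + (kn - kn1)/(kn + kn1) * θ = (kn + kn1 + (kn - kn1) * θ)/(kn + kn1) := by
    field_simp
  have hD : kn + kn1 + (kn - kn1) * θ ≠ 0 := by
    rw [he] at hden
    rcases div_pos_iff.mp hden with ⟨h1, _⟩ | ⟨_, h2⟩
    · linarith
    · linarith
  rw [he]
  field_simp [show kn + kn1 + θ * (kn - kn1) ≠ 0 by rw [mul_comm]; exact hD]
  ring

set_option maxHeartbeats 4000000 in
/-- Consistency of the DLN divided difference: for bounded step ratios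
`C_L ≤ k_n/k_{n-1} ≤ C_U` there is `C = C(θ, C_L, C_U) > 0` with
`‖(1/k̂_n)(α₂ u(t_{n+1}) + α₁ u(t_n) + α₀ u(t_{n-1})) − u'(t_{n,β})‖²
  ≤ C (k_n + k_{n-1})³ ∫_{t_{n-1}}^{t_{n+1}} ‖u'''‖²`. -/
theorem dln_divided_difference_consistency
    (θ : ℝ) (hθ : θ ∈ Set.Icc (0:ℝ) 1)
    (CL CU : ℝ) (hCL : 0 < CL) (hCLU : CL ≤ CU) :
    ∃ C : ℝ, 0 < C ∧
      ∀ (Y : Type*) [NormedAddCommGroup Y] [NormedSpace ℝ Y] [CompleteSpace Y]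
        (u : ℝ → Y), ContDiff ℝ 3 u →
        ∀ (t0 t1 t2 : ℝ), t0 < t1 → t1 < t2 →
          let kn : ℝ := t2 - t1
          let kn1 : ℝ := t1 - t0
          CL ≤ kn / kn1 → kn / kn1 ≤ CU →
          let ε : ℝ := (kn - kn1) / (kn + kn1)
          let α2 : ℝ := (θ + 1) / 2
          let α1 : ℝ := -θ
          let α0 : ℝ := (θ - 1) / 2
          let β2 : ℝ := (1/4) * (1 + (1 - θ^2)/(1 + ε*θ)^2 + ε^2*θ*(1 - θ^2)/(1 + ε*θ)^2 + θ)
          let β1 : ℝ := (1/2) * (1 - (1 - θ^2)/(1 + ε*θ)^2)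
          let β0 : ℝ := (1/4) * (1 + (1 - θ^2)/(1 + ε*θ)^2 - ε^2*θ*(1 - θ^2)/(1 + ε*θ)^2 - θ)
          let khat : ℝ := α2 * kn - α0 * kn1
          let tβ : ℝ := β2 * t2 + β1 * t1 + β0 * t0
          ‖(1/khat) • (α2 • u t2 + α1 • u t1 + α0 • u t0) - deriv u tβ‖^2
            ≤ C * (kn + kn1)^3 * ∫ t in t0..t2, ‖iteratedDeriv 3 u t‖^2 := by
  obtain ⟨hθ0, hθ1⟩ := hθ
  refine ⟨9*(CL+1)^2/CL^2, by positivity, ?_⟩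
  intro Y _ _ _ u hu t0 t1 t2 h01 h12 kn kn1 hrL hrU ε α2 α1 α0 β2 β1 β0 khat tβ
  have hkn : (0:ℝ) < kn := by show (0:ℝ) < t2 - t1; linarith
  have hkn1 : (0:ℝ) < kn1 := by show (0:ℝ) < t1 - t0; linarith
  have hs : (0:ℝ) < kn + kn1 := by linarith
  have h02 : t0 ≤ t2 := by linarith
  have hknr : CL * kn1 ≤ kn := (le_div_iff₀ hkn1).mp hrL
  -- denominator positivity
  have hε1 : (-1:ℝ) < ε := by
    show (-1:ℝ) < (kn - kn1)/(kn + kn1)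
    rw [lt_div_iff₀ hs]; linarith
  have hε2 : ε < 1 := by
    show (kn - kn1)/(kn + kn1) < 1
    rw [div_lt_one hs]; linarith
  have hden : (0:ℝ) < 1 + ε*θ := by
    have h1 : |ε| < 1 := abs_lt.mpr ⟨hε1, hε2⟩
    have h2 : |ε*θ| < 1 := by
      rw [abs_mul, abs_of_nonneg hθ0]
      nlinarith only [h1, hθ0, hθ1, abs_nonneg ε]
    linarith only [(abs_lt.mp h2).1]
  have hkhat : (0:ℝ) < khat := by
    show (0:ℝ) < (θ+1)/2 * kn - (θ-1)/2 * kn1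
    nlinarith only [hθ0, hθ1, h01, h12, mul_nonneg (sub_nonneg.mpr hθ1) (le_of_lt (sub_pos.mpr h01)), mul_nonneg hθ0 (le_of_lt (sub_pos.mpr h12))]
  have hkb : CL * (kn+kn1) ≤ 2*(CL+1) * khat := by
    show CL * ((t2-t1)+(t1-t0)) ≤ 2*(CL+1) * ((θ+1)/2*(t2-t1) - (θ-1)/2*(t1-t0))
    have hknr' : CL * (t1-t0) ≤ t2-t1 := hknr
    have e1 : (0:ℝ) ≤ t2-t1 := by linarith
    have e0 : (0:ℝ) ≤ t1-t0 := by linarith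
    linarith only [hknr', mul_nonneg hθ0 (sub_nonneg.mpr hknr'),
      mul_nonneg (mul_nonneg hCL.le hθ0) e1,
      mul_nonneg (mul_nonneg hCL.le hθ0) e0,
      mul_nonneg (mul_nonneg hCL.le (sub_nonneg.mpr hθ1)) e0,
      mul_nonneg (sub_nonneg.mpr hθ1) e0]
  have hkk : kn + kn1 = t2 - t0 := by
    show (t2 - t1) + (t1 - t0) = t2 - t0; ring
  -- scalar identities
  have hC : α2 + α1 + α0 = 0 := by
    show (θ+1)/2 + -θ + (θ-1)/2 = 0; ring
  have hB : α2*t2 + α1*t1 + α0*t0 = khat := by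
    show (θ+1)/2*t2 + -θ*t1 + (θ-1)/2*t0 = (θ+1)/2*(t2-t1) - (θ-1)/2*(t1-t0); ring
  have hA : α2*t2^2 + α1*t1^2 + α0*t0^2 = 2*khat*tβ := by
    have := dln_key θ kn kn1 t0 t1 t2 hkn hkn1
      (by show t2 = t1 + (t2 - t1); ring) (by show t0 = t1 - (t1 - t0); ring) hden
    exact this
  clear_value tβ
  have hS1 : α2*(t2-tβ) + α1*(t1-tβ) + α0*(t0-tβ) = khat := by
    linear_combination hB - tβ*hC
  have hS2 : α2*(t2-tβ)^2 + α1*(t1-tβ)^2 + α0*(t0-tβ)^2 = 0 := by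
    linear_combination hA - 2*tβ*hB + tβ^2*hC
  -- tβ ∈ [t0, t2]
  have hlo : t0 ≤ tβ := by
    have h1 : α2*(t2-t0)^2 + α1*(t1-t0)^2 + α0*(t0-t0)^2 = 2*khat*(tβ - t0) := by
      linear_combination hA - 2*t0*hB + t0^2*hC
    have hsq' : (t1-t0)^2 ≤ (t2-t0)^2 :=
      pow_le_pow_left₀ (by linarith only [h01]) (by linarith only [h12]) 2
    have h2 : 0 ≤ α2*(t2-t0)^2 + α1*(t1-t0)^2 + α0*(t0-t0)^2 := by
      show 0 ≤ (θ+1)/2*(t2-t0)^2 + -θ*(t1-t0)^2 + (θ-1)/2*(t0-t0)^2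
      linarith only [hsq', mul_nonneg hθ0 (sub_nonneg.mpr hsq'),
        mul_nonneg (sub_nonneg.mpr hθ1) (sq_nonneg (t1-t0))]
    have hd : (0:ℝ) ≤ tβ - t0 :=
      (mul_nonneg_iff_of_pos_left (by linarith only [hkhat] : (0:ℝ) < 2*khat)).mp
        (by linarith only [h1 ▸ h2] : (0:ℝ) ≤ 2*khat*(tβ - t0))
    linarith only [hd]
  have hhi : tβ ≤ t2 := by
    have h1 : α2*(t2-t2)^2 + α1*(t1-t2)^2 + α0*(t0-t2)^2 = 2*khat*(tβ - t2) := by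
      linear_combination hA - 2*t2*hB + t2^2*hC
    have h2 : α2*(t2-t2)^2 + α1*(t1-t2)^2 + α0*(t0-t2)^2 ≤ 0 := by
      show (θ+1)/2*(t2-t2)^2 + -θ*(t1-t2)^2 + (θ-1)/2*(t0-t2)^2 ≤ 0
      linarith only [mul_nonneg hθ0 (sq_nonneg (t1-t2)),
        mul_nonneg (sub_nonneg.mpr hθ1) (sq_nonneg (t0-t2))]
    have hd : tβ - t2 ≤ 0 :=
      nonpos_of_mul_nonpos_right
        (by linarith only [h1 ▸ h2] : (2*khat)*(tβ - t2) ≤ 0)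
        (by linarith only [hkhat] : (0:ℝ) < 2*khat)
    linarith only [hd]
  have habs2 : |α2| ≤ 1 := by
    show |(θ+1)/2| ≤ 1; rw [abs_le]; constructor <;> linarith only [hθ0, hθ1]
  have habs1 : |α1| ≤ 1 := by
    show |-θ| ≤ 1; rw [abs_le]; constructor <;> linarith only [hθ0, hθ1]
  have habs0 : |α0| ≤ 1 := by
    show |(θ-1)/2| ≤ 1; rw [abs_le]; constructor <;> linarith only [hθ0, hθ1]
  clear_value khat β0 β1 β2 α0 α1 α2 ε kn1 kn
  -- vector identity
  have hg : Continuous (iteratedDeriv 3 u) := hu.continuous_iteratedDeriv 3 (by norm_num)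
  have key : ∀ (v d1 d2 R2 R1 R0 : Y),
      α2 • (v + (t2 - tβ) • d1 + ((t2-tβ)^2/2) • d2 + R2)
    + α1 • (v + (t1 - tβ) • d1 + ((t1-tβ)^2/2) • d2 + R1)
    + α0 • (v + (t0 - tβ) • d1 + ((t0-tβ)^2/2) • d2 + R0)
    = khat • d1 + (α2 • R2 + α1 • R1 + α0 • R0) := by
    intro v d1 d2 R2 R1 R0
    match_scalars
    · linear_combination hC
    · linear_combination hS1
    · linear_combination hS2/2
    · ring
    · ring
    · ring
  have hsum : α2 • u t2 + α1 • u t1 + α0 • u t0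
      = khat • deriv u tβ
        + (α2 • (∫ s in tβ..t2, ((t2 - s)^2/2) • iteratedDeriv 3 u s)
         + α1 • (∫ s in tβ..t1, ((t1 - s)^2/2) • iteratedDeriv 3 u s)
         + α0 • (∫ s in tβ..t0, ((t0 - s)^2/2) • iteratedDeriv 3 u s)) := by
    rw [taylor3 hu tβ t2, taylor3 hu tβ t1, taylor3 hu tβ t0]
    exact key _ _ _ _ _ _
  have hkey : (1/khat) • (α2 • u t2 + α1 • u t1 + α0 • u t0) - deriv u tβ
      = (1/khat) • (α2 • (∫ s in tβ..t2, ((t2 - s)^2/2) • iteratedDeriv 3 u s)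
         + α1 • (∫ s in tβ..t1, ((t1 - s)^2/2) • iteratedDeriv 3 u s)
         + α0 • (∫ s in tβ..t0, ((t0 - s)^2/2) • iteratedDeriv 3 u s)) := by
    rw [hsum, smul_add, smul_smul, one_div, inv_mul_cancel₀ hkhat.ne', one_smul]
    abel
  rw [hkey]
  -- norm bounds
  set J := ∫ s in t0..t2, ‖iteratedDeriv 3 u s‖ with hJdef
  have hJ0 : 0 ≤ J := intervalIntegral.integral_nonneg h02 (fun t _ => norm_nonneg _)
  have hseg : ∀ b, b ∈ Icc t0 t2 →
      ‖∫ s in tβ..b, ((b - s)^2/2) • iteratedDeriv 3 u s‖ ≤ (kn+kn1)^2/2 * J := by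
    intro b hb
    have := seg_bound (M := (kn+kn1)^2/2) (φ := fun s => (b - s)^2/2) hg ⟨hlo, hhi⟩ hb
      (by continuity) (fun s hs => by
        rw [abs_of_nonneg (by positivity)]
        have h1 : |b - s| ≤ t2 - t0 := by
          rw [abs_le]; constructor <;> [linarith [hb.1, hs.2]; linarith [hb.2, hs.1]]
        have h2 : |b - s|^2 ≤ (t2 - t0)^2 := by
          apply pow_le_pow_left₀ (abs_nonneg _) h1
        rw [sq_abs] at h2
        rw [hkk]
        linarith only [h2])
    calc ‖∫ s in tβ..b, ((b - s)^2/2) • iteratedDeriv 3 u s‖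
        ≤ ∫ s in t0..t2, (kn+kn1)^2/2 * ‖iteratedDeriv 3 u s‖ := this
      _ = (kn+kn1)^2/2 * J := intervalIntegral.integral_const_mul _ _
  have hb2 := hseg t2 ⟨h02, le_refl t2⟩
  have hb1 := hseg t1 ⟨h01.le, h12.le⟩
  have hb0 := hseg t0 ⟨le_refl t0, h02⟩
  have hMnn : 0 ≤ (kn+kn1)^2/2 * J := mul_nonneg (by positivity) hJ0
  have hW : ‖α2 • (∫ s in tβ..t2, ((t2 - s)^2/2) • iteratedDeriv 3 u s)
         + α1 • (∫ s in tβ..t1, ((t1 - s)^2/2) • iteratedDeriv 3 u s)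
         + α0 • (∫ s in tβ..t0, ((t0 - s)^2/2) • iteratedDeriv 3 u s)‖
      ≤ 3 * ((kn+kn1)^2/2 * J) := by
    calc _ ≤ ‖α2 • (∫ s in tβ..t2, ((t2 - s)^2/2) • iteratedDeriv 3 u s)‖
         + ‖α1 • (∫ s in tβ..t1, ((t1 - s)^2/2) • iteratedDeriv 3 u s)‖
         + ‖α0 • (∫ s in tβ..t0, ((t0 - s)^2/2) • iteratedDeriv 3 u s)‖ := norm_add₃_le
      _ ≤ 3 * ((kn+kn1)^2/2 * J) := by
          rw [norm_smul, norm_smul, norm_smul, Real.norm_eq_abs, Real.norm_eq_abs,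
            Real.norm_eq_abs]
          have e2 := mul_le_mul habs2 hb2 (norm_nonneg _) one_pos.le
          have e1 := mul_le_mul habs1 hb1 (norm_nonneg _) one_pos.le
          have e0 := mul_le_mul habs0 hb0 (norm_nonneg _) one_pos.le
          linarith
  -- final assembly
  have hLnorm : ‖(1/khat) • (α2 • (∫ s in tβ..t2, ((t2 - s)^2/2) • iteratedDeriv 3 u s)
         + α1 • (∫ s in tβ..t1, ((t1 - s)^2/2) • iteratedDeriv 3 u s)
         + α0 • (∫ s in tβ..t0, ((t0 - s)^2/2) • iteratedDeriv 3 u s))‖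
      ≤ (1/khat) * (3 * ((kn+kn1)^2/2 * J)) := by
    rw [norm_smul, Real.norm_eq_abs, abs_of_pos (one_div_pos.mpr hkhat)]
    exact mul_le_mul_of_nonneg_left hW (one_div_pos.mpr hkhat).le
  set I := ∫ t in t0..t2, ‖iteratedDeriv 3 u t‖^2 with hIdef
  have hI0 : 0 ≤ I := intervalIntegral.integral_nonneg h02 (fun t _ => sq_nonneg _)
  have hcs : J^2 ≤ (kn+kn1) * I := by
    rw [hkk]
    exact cs_interval hg.norm h02
  have hLHS : ‖(1/khat) • (α2 • (∫ s in tβ..t2, ((t2 - s)^2/2) • iteratedDeriv 3 u s)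
         + α1 • (∫ s in tβ..t1, ((t1 - s)^2/2) • iteratedDeriv 3 u s)
         + α0 • (∫ s in tβ..t0, ((t0 - s)^2/2) • iteratedDeriv 3 u s))‖^2
      ≤ ((1/khat) * (3 * ((kn+kn1)^2/2 * J)))^2 :=
    pow_le_pow_left₀ (norm_nonneg _) hLnorm 2
  refine le_trans hLHS ?_
  rw [mul_pow, one_div, inv_pow, inv_mul_le_iff₀ (pow_pos hkhat 2)]
  rw [show khat^2 * (9*(CL+1)^2/CL^2 * (kn+kn1)^3 * I)
      = (9*(CL+1)^2 * (kn+kn1)^3 * I * khat^2)/CL^2 from by ring,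
    le_div_iff₀ (by positivity : (0:ℝ) < CL^2)]
  have hsq : (CL*(kn+kn1))*(CL*(kn+kn1)) ≤ (2*(CL+1)*khat)*(2*(CL+1)*khat) :=
    mul_le_mul hkb hkb (mul_nonneg hCL.le hs.le)
      (by nlinarith [hkb, mul_nonneg hCL.le hs.le])
  have hKpos : (0:ℝ) < kn + kn1 := hs
  have step1 : (9/4)*(kn+kn1)^4*CL^2*J^2 ≤ (9/4)*(kn+kn1)^4*CL^2*((kn+kn1)*I) :=
    mul_le_mul_of_nonneg_left hcs (by positivity)
  have step2 : (9/4)*((kn+kn1)^3*I)*((CL*(kn+kn1))*(CL*(kn+kn1)))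
      ≤ (9/4)*((kn+kn1)^3*I)*((2*(CL+1)*khat)*(2*(CL+1)*khat)) :=
    mul_le_mul_of_nonneg_left hsq
      (mul_nonneg (by norm_num) (mul_nonneg (pow_nonneg hs.le 3) hI0))
  linarith only [step1, step2]
end
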